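/- Let α ∈ (0,1), c, σ, η > 0 and let f be bounded measurable with ‖f‖_∞ = f(0) ≥ 0. With ũ(λ,0) = σ/(c + ηλ^α + σ√λ) ∫₀^∞ e^{-y√λ}f(y)dy + λ^{α-1} ηf(0)/(c + ηλ^α + σ√λ), we have for all λ ≥ 0: λũ(λ,0) - f(0) ≤ -f(0) · c/(c + ηλ^α + σ√λ), and also |λũ(λ,0) - f(0)| ≤ ‖f‖_∞ √((c/η)λ^{-α} + (σ/η)λ^{1/2-α}) for λ > 0. -/

import Mathlib

open MeasureTheory Real Set

lemma aux_int_bound (f : ℝ → ℝ) (hfb : ∀ y, |f y| ≤ f 0)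
    {s : ℝ} (hs : 0 < s) :
    |∫ y in Ioi (0:ℝ), Real.exp (-(y * s)) * f y| ≤ f 0 / s := by
  have hint : IntegrableOn (fun y : ℝ => Real.exp (-(y * s))) (Ioi (0:ℝ)) := by
    simpa [neg_mul, mul_comm] using exp_neg_integrableOn_Ioi 0 hs
  have hintval : (∫ y in Ioi (0:ℝ), Real.exp (-(y * s))) = 1 / s := by
    have := integral_comp_mul_right_Ioi (fun x : ℝ => Real.exp (-x)) 0 hs
    simp only [zero_mul, smul_eq_mul] at this
    rw [show (∫ y in Ioi (0:ℝ), Real.exp (-(y * s))) = s⁻¹ * ∫ x in Ioi (0:ℝ), Real.exp (-x) from this]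
    rw [integral_exp_neg_Ioi_zero]
    ring
  have h1 : |∫ y in Ioi (0:ℝ), Real.exp (-(y * s)) * f y|
      ≤ ∫ y in Ioi (0:ℝ), Real.exp (-(y * s)) * f 0 := by
    rw [← Real.norm_eq_abs]
    apply norm_integral_le_of_norm_le (hint.mul_const (f 0))
    filter_upwards with y
    rw [norm_mul, Real.norm_eq_abs, Real.norm_eq_abs, abs_of_pos (Real.exp_pos _)]
    exact mul_le_mul_of_nonneg_left (hfb y) (Real.exp_pos _).le
  calc |∫ y in Ioi (0:ℝ), Real.exp (-(y * s)) * f y|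
      ≤ ∫ y in Ioi (0:ℝ), Real.exp (-(y * s)) * f 0 := h1
    _ = (1 / s) * f 0 := by rw [integral_mul_const, hintval]
    _ = f 0 / s := by ring

theorem stmt_19 (α c σ η : ℝ) (hα : α ∈ Set.Ioo (0:ℝ) 1)
    (hc : 0 < c) (hσ : 0 < σ) (hη : 0 < η)
    (f : ℝ → ℝ) (hfm : Measurable f)
    -- f is bounded with ‖f‖_∞ = f(0) ≥ 0:
    (hfb : ∀ y, |f y| ≤ f 0)
    (utld : ℝ → ℝ)
    (hutld : ∀ lam : ℝ, 0 ≤ lam →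
      utld lam = σ / (c + η * lam ^ α + σ * Real.sqrt lam) *
          (∫ y in Ioi (0:ℝ), Real.exp (-(y * Real.sqrt lam)) * f y)
        + lam ^ (α - 1) * (η * f 0 / (c + η * lam ^ α + σ * Real.sqrt lam))) :
    (∀ lam : ℝ, 0 ≤ lam →
      lam * utld lam - f 0 ≤ -(f 0) * (c / (c + η * lam ^ α + σ * Real.sqrt lam)))
    ∧ ∀ lam : ℝ, 0 < lam →
      |lam * utld lam - f 0|
        ≤ f 0 * Real.sqrt ((c/η) * lam ^ (-α) + (σ/η) * lam ^ ((1:ℝ)/2 - α)) := by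
  obtain ⟨hα0, hα1⟩ := hα
  have hf0 : 0 ≤ f 0 := le_trans (abs_nonneg _) (hfb 0)
  have key : ∀ lam : ℝ, 0 < lam →
      lam * utld lam - f 0 =
        (σ * lam * (∫ y in Ioi (0:ℝ), Real.exp (-(y * Real.sqrt lam)) * f y)
          - (c + σ * Real.sqrt lam) * f 0) / (c + η * lam ^ α + σ * Real.sqrt lam) := by
    intro lam hlam
    have hs : 0 < Real.sqrt lam := Real.sqrt_pos.mpr hlam
    have hD : 0 < c + η * lam ^ α + σ * Real.sqrt lam := by
      have h1 : 0 ≤ η * lam ^ α := by positivity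
      nlinarith
    have hpow : lam * lam ^ (α - 1) = lam ^ α := by
      nth_rewrite 1 [← Real.rpow_one lam]
      rw [← Real.rpow_add hlam]
      norm_num
    rw [hutld lam hlam.le, mul_add]
    have h2 : lam * (lam ^ (α - 1) * (η * f 0 / (c + η * lam ^ α + σ * Real.sqrt lam)))
        = lam ^ α * (η * f 0) / (c + η * lam ^ α + σ * Real.sqrt lam) := by
      rw [← hpow]; ring
    rw [h2]
    field_simp
    ring
  constructor
  · intro lam hlam
    rcases hlam.eq_or_lt with h0 | hpos
    · rw [← h0]
      simp [hutld 0 le_rfl, Real.zero_rpow hα0.ne', div_self hc.ne']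
    · rw [key lam hpos]
      have hs : 0 < Real.sqrt lam := Real.sqrt_pos.mpr hpos
      have hss : Real.sqrt lam * Real.sqrt lam = lam := Real.mul_self_sqrt hpos.le
      have hD : 0 < c + η * lam ^ α + σ * Real.sqrt lam := by
        have h1 : 0 ≤ η * lam ^ α := by positivity
        nlinarith
      have hI := aux_int_bound f hfb hs
      set I := ∫ y in Ioi (0:ℝ), Real.exp (-(y * Real.sqrt lam)) * f y with hIdef
      have hIs : I * Real.sqrt lam ≤ f 0 := by
        have h := (le_abs_self I).trans hI
        calc I * Real.sqrt lam ≤ (f 0 / Real.sqrt lam) * Real.sqrt lam := by nlinarith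
          _ = f 0 := by field_simp
      rw [show -(f 0) * (c / (c + η * lam ^ α + σ * Real.sqrt lam))
          = (-(f 0) * c) / (c + η * lam ^ α + σ * Real.sqrt lam) by ring]
      gcongr ?_ / _
      have hmain : σ * lam * I ≤ σ * Real.sqrt lam * f 0 := by
        calc σ * lam * I = σ * Real.sqrt lam * (I * Real.sqrt lam) := by
              linear_combination σ * I * hss.symm
          _ ≤ σ * Real.sqrt lam * f 0 :=
            mul_le_mul_of_nonneg_left hIs (by positivity)
      linarith
  · intro lam hpos
    rw [key lam hpos]
    have hs : 0 < Real.sqrt lam := Real.sqrt_pos.mpr hpos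
    have hss : Real.sqrt lam * Real.sqrt lam = lam := Real.mul_self_sqrt hpos.le
    set a := c + σ * Real.sqrt lam with ha
    set b := η * lam ^ α with hb
    have hbpos : 0 < b := by rw [hb]; positivity
    have hapos : 0 < a := by rw [ha]; positivity
    have hDab : c + η * lam ^ α + σ * Real.sqrt lam = a + b := by rw [ha, hb]; ring
    have hD : 0 < c + η * lam ^ α + σ * Real.sqrt lam := by rw [hDab]; linarith
    have hI := aux_int_bound f hfb hs
    set I := ∫ y in Ioi (0:ℝ), Real.exp (-(y * Real.sqrt lam)) * f y with hIdef
    have hnum : |σ * lam * I - a * f 0| ≤ 2 * a * f 0 := by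
      have h1 : |σ * lam * I| ≤ σ * Real.sqrt lam * f 0 := by
        rw [abs_mul, abs_of_pos (by positivity : (0:ℝ) < σ * lam)]
        calc σ * lam * |I| ≤ σ * lam * (f 0 / Real.sqrt lam) :=
              mul_le_mul_of_nonneg_left hI (by positivity)
          _ = σ * Real.sqrt lam * f 0 := by
              field_simp
              linear_combination f 0 * hss.symm
      calc |σ * lam * I - a * f 0| ≤ |σ * lam * I| + |a * f 0| := abs_sub _ _
        _ ≤ σ * Real.sqrt lam * f 0 + a * f 0 := by
            rw [abs_of_nonneg (by positivity : (0:ℝ) ≤ a * f 0)]; linarith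
        _ ≤ 2 * a * f 0 := by
            have : σ * Real.sqrt lam ≤ a := by rw [ha]; linarith
            nlinarith
    have hsab : 0 < Real.sqrt (a * b) := Real.sqrt_pos.mpr (by positivity)
    have hyoung : 2 * Real.sqrt (a * b) ≤ a + b := by
      nlinarith [sq_nonneg (Real.sqrt a - Real.sqrt b), Real.sq_sqrt hapos.le,
        Real.sq_sqrt hbpos.le, Real.sqrt_mul hapos.le b, Real.sqrt_nonneg a, Real.sqrt_nonneg b]
    have hsa : 0 < Real.sqrt a := Real.sqrt_pos.mpr hapos
    have hsb : 0 < Real.sqrt b := Real.sqrt_pos.mpr hbpos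
    have hratio : a / Real.sqrt (a * b) = Real.sqrt (a / b) := by
      rw [Real.sqrt_div hapos.le, Real.sqrt_mul hapos.le,
        div_eq_div_iff (by positivity) hsb.ne']
      nlinarith [Real.mul_self_sqrt hapos.le]
    have htgt : (c/η) * lam ^ (-α) + (σ/η) * lam ^ ((1:ℝ)/2 - α) = a / b := by
      have h1 : lam ^ (-α) = (lam ^ α)⁻¹ := Real.rpow_neg hpos.le α
      have h2 : lam ^ ((1:ℝ)/2 - α) = Real.sqrt lam * (lam ^ α)⁻¹ := by
        rw [show (1:ℝ)/2 - α = 1/2 + -α by ring, Real.rpow_add hpos, h1,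
          ← Real.sqrt_eq_rpow]
      have hla : 0 < lam ^ α := Real.rpow_pos_of_pos hpos α
      rw [h1, h2, ha, hb]
      field_simp
    rw [htgt, abs_div, abs_of_pos hD, hDab]
    calc |σ * lam * I - a * f 0| / (a + b)
        ≤ (2 * a * f 0) / (2 * Real.sqrt (a * b)) :=
          div_le_div₀ (by positivity) hnum (by positivity) hyoung
      _ = f 0 * (a / Real.sqrt (a * b)) := by
          field_simp
      _ = f 0 * Real.sqrt (a / b) := by rw [hratio]
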